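/- Maximum principle for the Godunov-type scheme: let $g \in C^1([0,\rho_{\max}];\mathbb{R}^+)$ with $g' \geq 0$ and $v \in C^1([0,\rho_{\max}];\mathbb{R}^+)$ with $v' \leq 0$, let $(\gamma_k)_{k=0}^{N-1}$ be non-negative non-increasing with $\sum\gamma_k = 1$, and let $\lambda > 0$ satisfy the CFL condition $\lambda(\gamma_0\|v'\|\|g\| + \|v\|\|g'\|) \leq 1$. If $(\rho_j^0)_{j\in\mathbb{Z}} \subset [\rho_m,\rho_M] \subseteq [0,\rho_{\max}]$ and $\rho_j^{n+1} = \rho_j^n - \lambda(V_{j+1/2}^n g(\rho_j^n) - V_{j-1/2}^n g(\rho_{j-1}^n))$ with $V_{j+1/2}^n = \sum_{k=0}^{N-1}\gamma_k v(\rho_{j+k+1}^n)$, then $\rho_m \leq \rho_j^n \leq \rho_M$ for all $j \in \mathbb{Z}$, $n \in \mathbb{N}$. -/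

import Mathlib

noncomputable def supAbs (f : ℝ → ℝ) (s : Set ℝ) : ℝ :=
  sSup ((fun x => |f x|) '' s)

lemma abs_le_supAbs {ρmax : ℝ} (f : ℝ → ℝ) (hf : ContinuousOn f (Set.Icc 0 ρmax))
    {x : ℝ} (hx : x ∈ Set.Icc (0:ℝ) ρmax) : |f x| ≤ supAbs f (Set.Icc 0 ρmax) := by
  have hbdd : BddAbove ((fun y => |f y|) '' Set.Icc (0:ℝ) ρmax) :=
    (isCompact_Icc.image_of_continuousOn hf.abs).bddAbove
  exact le_csSup hbdd ⟨x, hx, rfl⟩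

lemma mvt_upper {ρmax : ℝ} (f f' : ℝ → ℝ)
    (hf : ∀ x ∈ Set.Icc (0:ℝ) ρmax, HasDerivAt f (f' x) x)
    (C : ℝ) (hC : ∀ x ∈ Set.Icc (0:ℝ) ρmax, f' x ≤ C)
    {a b : ℝ} (ha : a ∈ Set.Icc (0:ℝ) ρmax) (hb : b ∈ Set.Icc (0:ℝ) ρmax)
    (hab : a ≤ b) : f b - f a ≤ C * (b - a) := by
  rcases eq_or_lt_of_le hab with rfl | hlt
  · simp
  · have hsub : Set.Icc a b ⊆ Set.Icc (0:ℝ) ρmax := Set.Icc_subset_Icc ha.1 hb.2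
    have hcont : ContinuousOn f (Set.Icc a b) := fun x hx =>
      ((hf x (hsub hx)).continuousAt).continuousWithinAt
    obtain ⟨c, hc, hceq⟩ := exists_hasDerivAt_eq_slope f f' hlt hcont
      (fun x hx => hf x (hsub (Set.Ioo_subset_Icc_self hx)))
    have hne : b - a ≠ 0 := sub_ne_zero.mpr hlt.ne'
    have heq : f b - f a = f' c * (b - a) := by
      rw [hceq, div_mul_cancel₀ _ hne]
    rw [heq]
    exact mul_le_mul_of_nonneg_right (hC c (hsub (Set.Ioo_subset_Icc_self hc)))
      (by linarith)

lemma mvt_lower {ρmax : ℝ} (f f' : ℝ → ℝ)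
    (hf : ∀ x ∈ Set.Icc (0:ℝ) ρmax, HasDerivAt f (f' x) x)
    (C : ℝ) (hC : ∀ x ∈ Set.Icc (0:ℝ) ρmax, C ≤ f' x)
    {a b : ℝ} (ha : a ∈ Set.Icc (0:ℝ) ρmax) (hb : b ∈ Set.Icc (0:ℝ) ρmax)
    (hab : a ≤ b) : C * (b - a) ≤ f b - f a := by
  have := mvt_upper (fun x => -f x) (fun x => -(f' x))
    (fun x hx => (hf x hx).neg) (-C) (fun x hx => neg_le_neg (hC x hx)) ha hb hab
  simp only [neg_mul] at this
  linarith

lemma abel_bound (N : ℕ) (hN : 1 ≤ N) (γ : ℕ → ℝ)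
    (hγ_nonneg : ∀ k < N, 0 ≤ γ k)
    (hγ_mono : ∀ k, k + 1 < N → γ (k + 1) ≤ γ k)
    (f : ℕ → ℝ) (a b : ℝ)
    (hf : ∀ k, 1 ≤ k → k ≤ N → a ≤ f k ∧ f k ≤ b) :
    γ 0 * a ≤ (∑ k ∈ Finset.range N, γ k * f (k+1))
        - (∑ k ∈ Finset.range N, γ k * f k) + γ 0 * f 0 ∧
      (∑ k ∈ Finset.range N, γ k * f (k+1))
        - (∑ k ∈ Finset.range N, γ k * f k) + γ 0 * f 0 ≤ γ 0 * b := by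
  obtain ⟨M, rfl⟩ : ∃ M, N = M + 1 := ⟨N - 1, (Nat.succ_pred_eq_of_pos hN).symm⟩
  have h1 : ∑ k ∈ Finset.range (M+1), γ k * f k
      = (∑ k ∈ Finset.range M, γ (k+1) * f (k+1)) + γ 0 * f 0 :=
    Finset.sum_range_succ' _ M
  have h2 : ∑ k ∈ Finset.range (M+1), γ k * f (k+1)
      = (∑ k ∈ Finset.range M, γ k * f (k+1)) + γ M * f (M+1) :=
    Finset.sum_range_succ _ M
  have h3 : ∑ k ∈ Finset.range M, (γ k - γ (k+1)) * f (k+1)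
      = (∑ k ∈ Finset.range M, γ k * f (k+1))
        - ∑ k ∈ Finset.range M, γ (k+1) * f (k+1) := by
    rw [← Finset.sum_sub_distrib]
    exact Finset.sum_congr rfl fun k _ => by ring
  have hcoef : ∀ k ∈ Finset.range M, 0 ≤ γ k - γ (k+1) := by
    intro k hk
    have hk' : k + 1 < M + 1 := Nat.succ_lt_succ (Finset.mem_range.mp hk)
    linarith [hγ_mono k hk']
  have hγM : 0 ≤ γ M := hγ_nonneg M (by omega)
  have htel : ∑ k ∈ Finset.range M, (γ k - γ (k+1)) = γ 0 - γ M :=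
    Finset.sum_range_sub' γ M
  constructor
  · have hub : ∑ k ∈ Finset.range M, (γ k - γ (k+1)) * a
        ≤ ∑ k ∈ Finset.range M, (γ k - γ (k+1)) * f (k+1) := by
      apply Finset.sum_le_sum
      intro k hk
      exact mul_le_mul_of_nonneg_left
        (hf (k+1) (by omega) (by have := Finset.mem_range.mp hk; omega)).1
        (hcoef k hk)
    have hM : γ M * a ≤ γ M * f (M+1) :=
      mul_le_mul_of_nonneg_left (hf (M+1) (by omega) (by omega)).1 hγM
    have := Finset.sum_mul (Finset.range M) (fun k => γ k - γ (k+1)) a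
    rw [htel] at this
    linarith [hub, hM, h1, h2, h3, this.symm]
  · have hub : ∑ k ∈ Finset.range M, (γ k - γ (k+1)) * f (k+1)
        ≤ ∑ k ∈ Finset.range M, (γ k - γ (k+1)) * b := by
      apply Finset.sum_le_sum
      intro k hk
      exact mul_le_mul_of_nonneg_left
        (hf (k+1) (by omega) (by have := Finset.mem_range.mp hk; omega)).2
        (hcoef k hk)
    have hM : γ M * f (M+1) ≤ γ M * b :=
      mul_le_mul_of_nonneg_left (hf (M+1) (by omega) (by omega)).2 hγM
    have := Finset.sum_mul (Finset.range M) (fun k => γ k - γ (k+1)) b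
    rw [htel] at this
    linarith [hub, hM, h1, h2, h3, this.symm]

theorem godunov_maximum_principle
    (ρmax : ℝ) (hρmax : 0 < ρmax)
    (g g' v v' : ℝ → ℝ)
    (hg_deriv : ∀ x ∈ Set.Icc (0:ℝ) ρmax, HasDerivAt g (g' x) x)
    (hg'_cont : ContinuousOn g' (Set.Icc 0 ρmax))
    (hg_nonneg : ∀ x ∈ Set.Icc (0:ℝ) ρmax, 0 ≤ g x)
    (hg'_nonneg : ∀ x ∈ Set.Icc (0:ℝ) ρmax, 0 ≤ g' x)
    (hv_deriv : ∀ x ∈ Set.Icc (0:ℝ) ρmax, HasDerivAt v (v' x) x)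
    (hv'_cont : ContinuousOn v' (Set.Icc 0 ρmax))
    (hv_nonneg : ∀ x ∈ Set.Icc (0:ℝ) ρmax, 0 ≤ v x)
    (hv'_nonpos : ∀ x ∈ Set.Icc (0:ℝ) ρmax, v' x ≤ 0)
    (N : ℕ) (hN : 1 ≤ N) (γ : ℕ → ℝ)
    (hγ_nonneg : ∀ k < N, 0 ≤ γ k)
    (hγ_mono : ∀ k, k + 1 < N → γ (k + 1) ≤ γ k)
    (hγ_sum : ∑ k ∈ Finset.range N, γ k = 1)
    (lam : ℝ) (hlam : 0 < lam)
    (hCFL : lam * (γ 0 * supAbs v' (Set.Icc 0 ρmax) * supAbs g (Set.Icc 0 ρmax)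
        + supAbs v (Set.Icc 0 ρmax) * supAbs g' (Set.Icc 0 ρmax)) ≤ 1)
    (ρm ρM : ℝ) (hρm : 0 ≤ ρm) (hρM : ρM ≤ ρmax)
    (ρ : ℕ → ℤ → ℝ)
    (hinit : ∀ j, ρ 0 j ∈ Set.Icc ρm ρM)
    (V : ℕ → ℤ → ℝ)
    (hV : ∀ n j, V n j = ∑ k ∈ Finset.range N, γ k * v (ρ n (j + k + 1)))
    (hscheme : ∀ n j, ρ (n + 1) j =
      ρ n j - lam * (V n j * g (ρ n j) - V n (j - 1) * g (ρ n (j - 1)))) :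
    ∀ n j, ρm ≤ ρ n j ∧ ρ n j ≤ ρM := by
  have h0mem : (0:ℝ) ∈ Set.Icc (0:ℝ) ρmax := ⟨le_refl 0, le_of_lt hρmax⟩
  have hmM : ρm ≤ ρM := le_trans (hinit 0).1 (hinit 0).2
  have hsub : Set.Icc ρm ρM ⊆ Set.Icc (0:ℝ) ρmax := Set.Icc_subset_Icc hρm hρM
  have hρmmem : ρm ∈ Set.Icc (0:ℝ) ρmax := ⟨hρm, le_trans hmM hρM⟩
  have hρMmem : ρM ∈ Set.Icc (0:ℝ) ρmax := ⟨le_trans hρm hmM, hρM⟩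
  have hgcont : ContinuousOn g (Set.Icc 0 ρmax) := fun x hx =>
    (hg_deriv x hx).continuousAt.continuousWithinAt
  have hvcont : ContinuousOn v (Set.Icc 0 ρmax) := fun x hx =>
    (hv_deriv x hx).continuousAt.continuousWithinAt
  set Mg := supAbs g (Set.Icc 0 ρmax) with hMg_def
  set Mv := supAbs v (Set.Icc 0 ρmax) with hMv_def
  set Mg' := supAbs g' (Set.Icc 0 ρmax) with hMg'_def
  set Mv' := supAbs v' (Set.Icc 0 ρmax) with hMv'_def
  have hg_le : ∀ x ∈ Set.Icc (0:ℝ) ρmax, g x ≤ Mg := fun x hx =>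
    le_trans (le_abs_self _) (abs_le_supAbs g hgcont hx)
  have hg'_le : ∀ x ∈ Set.Icc (0:ℝ) ρmax, g' x ≤ Mg' := fun x hx =>
    le_trans (le_abs_self _) (abs_le_supAbs g' hg'_cont hx)
  have hv_le : ∀ x ∈ Set.Icc (0:ℝ) ρmax, v x ≤ Mv := fun x hx =>
    le_trans (le_abs_self _) (abs_le_supAbs v hvcont hx)
  have hv'_lb : ∀ x ∈ Set.Icc (0:ℝ) ρmax, -Mv' ≤ v' x := by
    intro x hx
    have h1 := abs_le_supAbs v' hv'_cont hx
    have h2 := neg_abs_le (v' x)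
    linarith
  have hMg'0 : 0 ≤ Mg' := le_trans (abs_nonneg _) (abs_le_supAbs g' hg'_cont h0mem)
  have hMv'0 : 0 ≤ Mv' := le_trans (abs_nonneg _) (abs_le_supAbs v' hv'_cont h0mem)
  have hγ0 : 0 ≤ γ 0 := hγ_nonneg 0 hN
  have hg_mono : ∀ a b, a ∈ Set.Icc (0:ℝ) ρmax → b ∈ Set.Icc (0:ℝ) ρmax →
      a ≤ b → g a ≤ g b := by
    intro a b ha hb hab
    have := mvt_lower g g' hg_deriv 0 hg'_nonneg ha hb hab
    linarith
  have hv_anti : ∀ a b, a ∈ Set.Icc (0:ℝ) ρmax → b ∈ Set.Icc (0:ℝ) ρmax →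
      a ≤ b → v b ≤ v a := by
    intro a b ha hb hab
    have := mvt_upper v v' hv_deriv 0 hv'_nonpos ha hb hab
    linarith
  have hg_lip : ∀ a b, a ∈ Set.Icc (0:ℝ) ρmax → b ∈ Set.Icc (0:ℝ) ρmax →
      a ≤ b → g b - g a ≤ Mg' * (b - a) :=
    fun a b ha hb hab => mvt_upper g g' hg_deriv Mg' hg'_le ha hb hab
  have hv_lip : ∀ a b, a ∈ Set.Icc (0:ℝ) ρmax → b ∈ Set.Icc (0:ℝ) ρmax →
      a ≤ b → v a - v b ≤ Mv' * (b - a) := by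
    intro a b ha hb hab
    have := mvt_lower v v' hv_deriv (-Mv') hv'_lb ha hb hab
    linarith
  intro n
  induction n with
  | zero => intro j; exact ⟨(hinit j).1, (hinit j).2⟩
  | succ n ih =>
    intro j
    have hmem : ∀ i : ℤ, ρ n i ∈ Set.Icc (0:ℝ) ρmax := fun i => hsub ⟨(ih i).1, (ih i).2⟩
    have hVnonneg : 0 ≤ V n j := by
      rw [hV]
      exact Finset.sum_nonneg fun k hk =>
        mul_nonneg (hγ_nonneg k (Finset.mem_range.mp hk)) (hv_nonneg _ (hmem _))
    have hVle : V n j ≤ Mv := by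
      rw [hV]
      calc ∑ k ∈ Finset.range N, γ k * v (ρ n (j + k + 1))
          ≤ ∑ k ∈ Finset.range N, γ k * Mv :=
            Finset.sum_le_sum fun k hk => mul_le_mul_of_nonneg_left
              (hv_le _ (hmem _)) (hγ_nonneg k (Finset.mem_range.mp hk))
        _ = Mv := by rw [← Finset.sum_mul, hγ_sum, one_mul]
    set f : ℕ → ℝ := fun k => v (ρ n (j + k)) with hf_def
    have hfab : ∀ k, 1 ≤ k → k ≤ N → v ρM ≤ f k ∧ f k ≤ v ρm := by
      intro k _ _
      exact ⟨hv_anti _ ρM (hmem _) hρMmem (ih _).2,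
        hv_anti ρm _ hρmmem (hmem _) (ih _).1⟩
    obtain ⟨habel1, habel2⟩ := abel_bound N hN γ hγ_nonneg hγ_mono f (v ρM) (v ρm) hfab
    have hVj : V n j = ∑ k ∈ Finset.range N, γ k * f (k + 1) := by
      rw [hV]
      refine Finset.sum_congr rfl fun k _ => ?_
      simp only [hf_def]
      push_cast
      ring_nf
    have hVjm : V n (j - 1) = ∑ k ∈ Finset.range N, γ k * f k := by
      rw [hV]
      refine Finset.sum_congr rfl fun k _ => ?_
      simp only [hf_def]
      rw [show j - 1 + (k:ℤ) + 1 = j + (k:ℤ) from by ring]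
    have hf0 : f 0 = v (ρ n j) := by simp [hf_def]
    rw [← hVj, ← hVjm, hf0] at habel1 habel2
    have hxM : ρ n j ≤ ρM := (ih j).2
    have hxm : ρm ≤ ρ n j := (ih j).1
    have hxmem := hmem j
    have hymem := hmem (j - 1)
    have hgy0 : 0 ≤ g (ρ n (j - 1)) := hg_nonneg _ hymem
    have hgyM : g (ρ n (j - 1)) ≤ Mg := hg_le _ hymem
    have hscheme' : ρ (n+1) j = ρ n j - lam * (V n j * (g (ρ n j) - g (ρ n (j - 1)))
        + g (ρ n (j - 1)) * (V n j - V n (j - 1))) := by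
      rw [hscheme n j]; ring
    constructor
    · -- lower bound
      have hA : g (ρ n j) - g ρm ≤ Mg' * (ρ n j - ρm) := hg_lip ρm _ hρmmem hxmem hxm
      have hB : g ρm ≤ g (ρ n (j - 1)) := hg_mono ρm _ hρmmem hymem (ih _).1
      have hvd : v ρm - v (ρ n j) ≤ Mv' * (ρ n j - ρm) := hv_lip ρm _ hρmmem hxmem hxm
      have c1 : (0:ℝ) ≤ Mg' * (ρ n j - ρm) := mul_nonneg hMg'0 (by linarith)
      have c2 : (0:ℝ) ≤ γ 0 * (Mv' * (ρ n j - ρm)) :=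
        mul_nonneg hγ0 (mul_nonneg hMv'0 (by linarith))
      have d1 : g (ρ n j) - g (ρ n (j - 1)) ≤ Mg' * (ρ n j - ρm) := by linarith
      have e1 : V n j * (g (ρ n j) - g (ρ n (j - 1))) ≤ Mv * (Mg' * (ρ n j - ρm)) :=
        le_trans (mul_le_mul_of_nonneg_left d1 hVnonneg)
          (mul_le_mul_of_nonneg_right hVle c1)
      have d2 : V n j - V n (j - 1) ≤ γ 0 * (Mv' * (ρ n j - ρm)) := by
        have h := mul_le_mul_of_nonneg_left hvd hγ0
        linarith only [h, habel2]
      have e2 : g (ρ n (j - 1)) * (V n j - V n (j - 1))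
          ≤ Mg * (γ 0 * (Mv' * (ρ n j - ρm))) :=
        le_trans (mul_le_mul_of_nonneg_left d2 hgy0)
          (mul_le_mul_of_nonneg_right hgyM c2)
      have hK := mul_le_mul_of_nonneg_right hCFL (by linarith : (0:ℝ) ≤ ρ n j - ρm)
      rw [hscheme']
      have hfin := mul_le_mul_of_nonneg_left (add_le_add e1 e2) hlam.le
      linarith only [hfin, hK]
    · -- upper bound
      have hA : g ρM - g (ρ n j) ≤ Mg' * (ρM - ρ n j) := hg_lip _ ρM hxmem hρMmem hxM
      have hB : g (ρ n (j - 1)) ≤ g ρM := hg_mono _ ρM hymem hρMmem (ih _).2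
      have hvd : v (ρ n j) - v ρM ≤ Mv' * (ρM - ρ n j) := hv_lip _ ρM hxmem hρMmem hxM
      have c1 : (0:ℝ) ≤ Mg' * (ρM - ρ n j) := mul_nonneg hMg'0 (by linarith)
      have c2 : (0:ℝ) ≤ γ 0 * (Mv' * (ρM - ρ n j)) :=
        mul_nonneg hγ0 (mul_nonneg hMv'0 (by linarith))
      have d1 : -(Mg' * (ρM - ρ n j)) ≤ g (ρ n j) - g (ρ n (j - 1)) := by linarith
      have e1 : -(Mv * (Mg' * (ρM - ρ n j))) ≤ V n j * (g (ρ n j) - g (ρ n (j - 1))) := by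
        have h1 := mul_le_mul_of_nonneg_left d1 hVnonneg
        have h2 := mul_le_mul_of_nonneg_right hVle c1
        linarith only [h1, h2]
      have d2 : -(γ 0 * (Mv' * (ρM - ρ n j))) ≤ V n j - V n (j - 1) := by
        have h := mul_le_mul_of_nonneg_left hvd hγ0
        linarith only [h, habel1]
      have e2 : -(Mg * (γ 0 * (Mv' * (ρM - ρ n j))))
          ≤ g (ρ n (j - 1)) * (V n j - V n (j - 1)) := by
        have h1 := mul_le_mul_of_nonneg_left d2 hgy0
        have h2 := mul_le_mul_of_nonneg_right hgyM c2
        linarith only [h1, h2]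
      have hK := mul_le_mul_of_nonneg_right hCFL (by linarith : (0:ℝ) ≤ ρM - ρ n j)
      rw [hscheme']
      have hfin := mul_le_mul_of_nonneg_left
        (neg_le_neg (add_le_add e1 e2) : -(V n j * (g (ρ n j) - g (ρ n (j - 1))) + g (ρ n (j - 1)) * (V n j - V n (j - 1))) ≤ -(-(Mv * (Mg' * (ρM - ρ n j))) + -(Mg * (γ 0 * (Mv' * (ρM - ρ n j)))))) hlam.le
      linarith only [hfin, hK]
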